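/- The collection of nonempty compact subsets of ℝ that are ℋ-visible is dense in 𝒞(ℝ). -/

import Mathlib

open Set TopologicalSpace MeasureTheory ENNReal

/-- The generalized Hausdorff measure `μ^h` on `ℝ` with gauge `h`. -/
noncomputable def hausdorffGaugeMeasure (h : ℝ → ℝ) : Measure ℝ :=
  Measure.mkMetric (fun d : ℝ≥0∞ => ENNReal.ofReal (h d.toReal))

/-- `M` is `ℋ`-visible: `0 < μ^h M < ∞` for some gauge `h ∈ ℋ`
(`h : [0,∞) → [0,∞)` continuous, nondecreasing, `h 0 = 0`). -/
def HVisible (M : Set ℝ) : Prop :=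
  ∃ h : ℝ → ℝ, h 0 = 0 ∧ ContinuousOn h (Set.Ici 0) ∧ MonotoneOn h (Set.Ici 0) ∧
    (∀ x ∈ Set.Ici (0 : ℝ), 0 ≤ h x) ∧
    0 < hausdorffGaugeMeasure h M ∧ hausdorffGaugeMeasure h M < ⊤

lemma hausdorffGaugeMeasure_id : hausdorffGaugeMeasure (fun x => x) = volume := by
  have h1 : hausdorffGaugeMeasure (fun x => x) = (μH[1] : Measure ℝ) := by
    unfold hausdorffGaugeMeasure MeasureTheory.Measure.hausdorffMeasure
    have hev : ∀ᶠ d in nhds (0 : ℝ≥0∞), ENNReal.ofReal d.toReal = d ^ (1 : ℝ) := by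
      filter_upwards [eventually_lt_nhds (by norm_num : (0:ℝ≥0∞) < 1)] with d hd
      rw [ENNReal.rpow_one]
      exact ENNReal.ofReal_toReal (ne_top_of_lt hd)
    exact le_antisymm (MeasureTheory.Measure.mkMetric_mono (hev.mono fun d h => h.le))
      (MeasureTheory.Measure.mkMetric_mono (hev.mono fun d h => h.ge))
  rw [h1, MeasureTheory.hausdorffMeasure_real]

theorem stmt_8 : Dense {K : NonemptyCompacts ℝ | HVisible (K : Set ℝ)} := by
  rw [Metric.dense_iff]
  intro K ε hε
  obtain ⟨x, hx⟩ := K.nonempty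
  set δ := ε / 2 with hδdef
  have hδ : 0 < δ := half_pos hε
  have hcomp : IsCompact ((K : Set ℝ) ∪ Set.Icc x (x + δ)) := K.isCompact.union isCompact_Icc
  refine ⟨⟨⟨_, hcomp⟩, ⟨x, Or.inl hx⟩⟩, Metric.mem_ball.2 ?_, ?_⟩
  · have hle : Metric.hausdorffDist ((K : Set ℝ) ∪ Set.Icc x (x + δ)) (K : Set ℝ) ≤ δ := by
      apply Metric.hausdorffDist_le_of_mem_dist hδ.le
      · rintro a (ha | ha)
        · exact ⟨a, ha, by simp [hδ.le]⟩
        · refine ⟨x, hx, ?_⟩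
          rw [Real.dist_eq, abs_le]
          constructor <;> linarith [ha.1, ha.2]
      · exact fun b hb => ⟨b, Or.inl hb, by simp [hδ.le]⟩
    calc dist (⟨⟨(K : Set ℝ) ∪ Set.Icc x (x + δ), hcomp⟩, ⟨x, Or.inl hx⟩⟩ : NonemptyCompacts ℝ) K
        = Metric.hausdorffDist ((K : Set ℝ) ∪ Set.Icc x (x + δ)) (K : Set ℝ) :=
          Metric.NonemptyCompacts.dist_eq
      _ ≤ δ := hle
      _ < ε := by linarith
  · refine ⟨fun x => x, rfl, continuousOn_id, monotoneOn_id, fun x hx => hx, ?_, ?_⟩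
    · rw [hausdorffGaugeMeasure_id]
      have h1 : (0 : ℝ≥0∞) < volume (Set.Icc x (x + δ)) := by
        rw [Real.volume_Icc]
        simpa using hδ
      exact h1.trans_le (measure_mono Set.subset_union_right)
    · rw [hausdorffGaugeMeasure_id]
      exact hcomp.measure_lt_top
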